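/- For continuous maps f, g : X → Y and h : W → X, D(f ∘ h, g ∘ h) ≤ D(f, g); moreover if h is a homotopy equivalence then D(f ∘ h, g ∘ h) = D(f, g). -/

import Mathlib

/-- Homotopic distance: least `n` such that `X` has an open cover by `n+1` open sets on each
of which `f` and `g` restrict to homotopic maps; `⊤` if no such cover exists. -/
noncomputable def hDist {X Y : Type*} [TopologicalSpace X] [TopologicalSpace Y]
    (f g : C(X, Y)) : ℕ∞ :=
  sInf {N : ℕ∞ | ∃ n : ℕ, N = n ∧ ∃ U : Fin (n + 1) → Set X,
    (∀ i, IsOpen (U i)) ∧ (∀ x, ∃ i, x ∈ U i) ∧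
    ∀ i, (f.restrict (U i)).Homotopic (g.restrict (U i))}

lemma restrict_eq_comp_incl {X Y : Type*} [TopologicalSpace X] [TopologicalSpace Y]
    (f : C(X, Y)) (U : Set X) :
    f.restrict U = f.comp ⟨Subtype.val, continuous_subtype_val⟩ := by
  ext x; rfl

lemma hDist_le_comp {W X Y : Type*} [TopologicalSpace W] [TopologicalSpace X]
    [TopologicalSpace Y] (f g : C(X, Y)) (h : C(W, X)) :
    hDist (f.comp h) (g.comp h) ≤ hDist f g := by
  apply sInf_le_sInf
  rintro N ⟨n, rfl, U, hopen, hcov, hhom⟩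
  refine ⟨n, rfl, fun i => h ⁻¹' (U i), fun i => (hopen i).preimage h.continuous,
    fun x => hcov (h x), fun i => ?_⟩
  set h' : C(h ⁻¹' (U i), U i) :=
    ⟨fun x => ⟨h x, x.2⟩, by continuity⟩ with hh'
  have e : ∀ (p : C(X, Y)), (p.comp h).restrict (h ⁻¹' (U i)) = (p.restrict (U i)).comp h' := by
    intro p; ext x; rfl
  rw [e f, e g]
  exact ContinuousMap.Homotopic.comp (hhom i) (ContinuousMap.Homotopic.refl h')

lemma hDist_congr {X Y : Type*} [TopologicalSpace X] [TopologicalSpace Y]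
    {f f' g g' : C(X, Y)} (hf : f.Homotopic f') (hg : g.Homotopic g') :
    hDist f g = hDist f' g' := by
  have key : ∀ (f f' g g' : C(X, Y)), f.Homotopic f' → g.Homotopic g' →
      hDist f' g' ≤ hDist f g := by
    intro f f' g g' hf hg
    apply sInf_le_sInf
    rintro N ⟨n, rfl, U, hopen, hcov, hhom⟩
    refine ⟨n, rfl, U, hopen, hcov, fun i => ?_⟩
    have rf : (f.restrict (U i)).Homotopic (f'.restrict (U i)) := by
      rw [restrict_eq_comp_incl f, restrict_eq_comp_incl f']
      exact ContinuousMap.Homotopic.comp hf (ContinuousMap.Homotopic.refl _)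
    have rg : (g.restrict (U i)).Homotopic (g'.restrict (U i)) := by
      rw [restrict_eq_comp_incl g, restrict_eq_comp_incl g']
      exact ContinuousMap.Homotopic.comp hg (ContinuousMap.Homotopic.refl _)
    exact (rf.symm.trans (hhom i)).trans rg
  exact le_antisymm (key _ _ _ _ hf.symm hg.symm) (key _ _ _ _ hf hg)

theorem hDist_comp_right {W X Y : Type*} [TopologicalSpace W] [TopologicalSpace X]
    [TopologicalSpace Y] (f g : C(X, Y)) (h : C(W, X)) :
    hDist (f.comp h) (g.comp h) ≤ hDist f g ∧
      ((∃ k : C(X, W), (h.comp k).Homotopic (ContinuousMap.id X) ∧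
          (k.comp h).Homotopic (ContinuousMap.id W)) →
        hDist (f.comp h) (g.comp h) = hDist f g) := by
  refine ⟨hDist_le_comp f g h, ?_⟩
  rintro ⟨k, hk1, _⟩
  refine le_antisymm (hDist_le_comp f g h) ?_
  have e1 : (f.comp (h.comp k)).Homotopic f := by
    have := (ContinuousMap.Homotopic.comp (ContinuousMap.Homotopic.refl f) hk1)
    rwa [ContinuousMap.comp_id] at this
  have e2 : (g.comp (h.comp k)).Homotopic g := by
    have := (ContinuousMap.Homotopic.comp (ContinuousMap.Homotopic.refl g) hk1)
    rwa [ContinuousMap.comp_id] at this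
  calc hDist f g = hDist (f.comp (h.comp k)) (g.comp (h.comp k)) := hDist_congr e1.symm e2.symm
    _ = hDist ((f.comp h).comp k) ((g.comp h).comp k) := by rw [ContinuousMap.comp_assoc, ContinuousMap.comp_assoc]
    _ ≤ hDist (f.comp h) (g.comp h) := hDist_le_comp _ _ k
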